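/- Let x = x₁ b₁ a^{k₁} be a string of length m, where x₁ ∈ Σ*, a, b₁ ∈ Σ with b₁ ≠ a, and k₁ ≥ 1 is an integer. Let ℓ₁ = |x₁ b₁| and r₁ = m - 2. Then for every position i with ℓ₁ ≤ i ≤ r₁, suff[i] = i - ℓ₁ + 1. -/

import Mathlib

/-- `suffT x i` is the length of the longest common suffix of `x` and `x[0..i]`,
i.e. the largest `k` with `0 ≤ k ≤ i+1` such that `x[i-k+1..i] = x[m-k..m-1]`. -/
def suffT {α : Type*} [DecidableEq α] (x : List α) (i : ℕ) : ℕ :=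
  Nat.findGreatest
    (fun k => (x.take (i + 1)).drop (i + 1 - k) = x.drop (x.length - k)) (i + 1)

/-- `Cond-suf(i,d)`: either `0 < d ≤ i+1` and `x[i-d+1..m-d-1]` is a suffix of `x`,
or `i+1 < d` and `x[0..m-d-1]` is a suffix of `x`. -/
def CondSuf {α : Type*} (x : List α) (i d : ℕ) : Prop :=
  (0 < d ∧ d ≤ i + 1 ∧ (x.drop (i + 1 - d)).take (x.length - 1 - i) <:+ x) ∨
  (i + 1 < d ∧ x.take (x.length - d) <:+ x)

/-- `Cond-occ(i,d)`: either `0 < d ≤ i` and `x[i-d] ≠ x[i]`, or `i < d`. -/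
def CondOcc {α : Type*} (x : List α) (i d : ℕ) : Prop :=
  (0 < d ∧ d ≤ i ∧ x[i - d]? ≠ x[i]?) ∨ i < d

/-- `goodSuff x i = min { d | Cond-suf(i,d) and Cond-occ(i,d) }`. -/
noncomputable def goodSuff {α : Type*} (x : List α) (i : ℕ) : ℕ :=
  sInf {d | CondSuf x i d ∧ CondOcc x i d}

/-- Let `x = x₁ b₁ a^{k₁}` of length `m` with `b₁ ≠ a` and `k₁ ≥ 1`.
Let `ℓ₁ = |x₁ b₁|` and `r₁ = m - 2`. Then for every position `i` with `ℓ₁ ≤ i ≤ r₁`,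
`suff[i] = i - ℓ₁ + 1`. -/
theorem statement0 {α : Type*} [DecidableEq α] (x₁ : List α) (a b₁ : α) (k₁ : ℕ)
    (hb₁ : b₁ ≠ a) (hk₁ : 1 ≤ k₁)
    (x : List α) (hx : x = x₁ ++ [b₁] ++ List.replicate k₁ a)
    (i : ℕ) (hℓ : x₁.length + 1 ≤ i) (hr : i ≤ x.length - 2) :
    suffT x i = i - (x₁.length + 1) + 1 := by
  subst hx
  set n := x₁.length with hn
  have hm : (x₁ ++ [b₁] ++ List.replicate k₁ a).length = n + 1 + k₁ := by simp; omega
  rw [hm] at hr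
  have hi2 : i + 2 ≤ n + 1 + k₁ := by omega
  set L := i - (n + 1) + 1 with hL
  rw [suffT]
  apply (Nat.findGreatest_eq_iff).mpr
  refine ⟨by omega, fun _ => ?_, fun k hk1 hk2 hP => ?_⟩
  · -- P L
    rw [hm]
    have h1 : i + 1 - L = n + 1 := by omega
    have h2 : n + 1 + k₁ - L = (n + 1) + (k₁ - L) := by omega
    have hlen : (x₁ ++ [b₁]).length = n + 1 := by simp [hn]
    rw [h1, h2]
    have e1 : ((x₁ ++ [b₁] ++ List.replicate k₁ a).take (i + 1)).drop (n + 1)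
        = List.replicate L a := by
      rw [List.take_append, List.take_of_length_le (by omega),
        List.drop_append, List.drop_of_length_le (by omega), hlen,
        List.take_replicate]
      simp only [List.nil_append]
      rw [List.drop_replicate]
      congr 1
      omega
    have e2 : (x₁ ++ [b₁] ++ List.replicate k₁ a).drop (n + 1 + (k₁ - L))
        = List.replicate L a := by
      rw [List.drop_append, List.drop_of_length_le (by omega), hlen,
        List.drop_replicate]
      simp only [List.nil_append]
      congr 1
      omega
    rw [e1, e2]
  · -- ¬ P k for L < k ≤ i + 1
    rw [hm] at hP
    set t := n - (i + 1 - k) with ht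
    have := congrArg (fun l => l[t]?) hP
    rw [List.getElem?_drop, List.getElem?_drop] at this
    have e1 : i + 1 - k + t = n := by omega
    have e2 : n + 1 + k₁ - k + t = (n + 1) + (n + k₁ - 1 - i) := by omega
    rw [e1, e2, List.getElem?_take, if_pos (by omega)] at this
    rw [List.append_assoc, List.getElem?_append_right (by omega)] at this
    have e3 : n + 1 + (n + k₁ - 1 - i) - x₁.length = 1 + (n + k₁ - 1 - i) := by omega
    rw [List.getElem?_append_right (show x₁.length ≤ n + 1 + (n + k₁ - 1 - i) by omega),
      e3, List.getElem?_append_right (show ([b₁]:List α).length ≤ 1 + (n + k₁ - 1 - i) by simp)] at this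
    have hL' : n - x₁.length = 0 := by omega
    have hR' : (List.replicate k₁ a)[1 + (n + k₁ - 1 - i) - ([b₁]:List α).length]? = some a := by
      rw [List.getElem?_eq_getElem (by simp; omega)]
      simp
    rw [hL', hR'] at this
    simp at this
    exact hb₁ this
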